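/- Let u be a bounded C² solution of the system Δu = ∇H(u) on ℝ^N such that H_{u_i}(u(x)) ≤ 0 for every i and every x ∈ ℝ^N. Then there is a constant C > 0, depending only on N, m and max_i ‖u_i‖_{L^∞(ℝ^N)}, such that Σ_{i=1}^m ∫_{B_R} |∇u_i|² dx ≤ C R^{N−2} for every R ≥ 1. -/

import Mathlib

open MeasureTheory Metric Filter Finset

noncomputable section

/-- Partial derivative of `f` at `x` in the `k`-th coordinate direction of `ℝ^N`. -/
def pd {N : ℕ} (f : EuclideanSpace ℝ (Fin N) → ℝ) (k : Fin N)
    (x : EuclideanSpace ℝ (Fin N)) : ℝ :=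
  fderiv ℝ f x (EuclideanSpace.single k 1)

/-- Laplacian of `f` at `x`: the sum of the pure second partial derivatives. -/
def lap {N : ℕ} (f : EuclideanSpace ℝ (Fin N) → ℝ) (x : EuclideanSpace ℝ (Fin N)) : ℝ :=
  ∑ k, pd (pd f k) k x

/-- `H_{u_i}`, the `i`-th partial derivative of `H : ℝ^m → ℝ`. -/
def Hp {m : ℕ} (H : EuclideanSpace ℝ (Fin m) → ℝ) (i : Fin m)
    (p : EuclideanSpace ℝ (Fin m)) : ℝ :=
  fderiv ℝ H p (EuclideanSpace.single i 1)

/-- `H_{u_i u_j}`, the second mixed partial derivative of `H : ℝ^m → ℝ`. -/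
def Hpp {m : ℕ} (H : EuclideanSpace ℝ (Fin m) → ℝ) (i j : Fin m)
    (p : EuclideanSpace ℝ (Fin m)) : ℝ :=
  fderiv ℝ (Hp H i) p (EuclideanSpace.single j 1)

/-- `u` solves the system `Δ u = ∇H(u)` on `Ω`. -/
def IsSolution {N m : ℕ} (H : EuclideanSpace ℝ (Fin m) → ℝ)
    (u : EuclideanSpace ℝ (Fin N) → EuclideanSpace ℝ (Fin m))
    (Ω : Set (EuclideanSpace ℝ (Fin N))) : Prop :=
  ∀ i : Fin m, ∀ x ∈ Ω, lap (fun y => u y i) x = Hp H i (u x)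

/-- `u` is a stable solution of `Δ u = ∇H(u)` on `Ω`: the second variation of the
energy is nonnegative on test functions `ζ_1, …, ζ_m ∈ C¹_c(Ω)`. -/
def Stable {N m : ℕ} (H : EuclideanSpace ℝ (Fin m) → ℝ)
    (u : EuclideanSpace ℝ (Fin N) → EuclideanSpace ℝ (Fin m))
    (Ω : Set (EuclideanSpace ℝ (Fin N))) : Prop :=
  ∀ ζ : Fin m → EuclideanSpace ℝ (Fin N) → ℝ,
    (∀ i, ContDiff ℝ 1 (ζ i)) → (∀ i, HasCompactSupport (ζ i)) →
    (∀ i, tsupport (ζ i) ⊆ Ω) →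
    0 ≤ (∑ i, ∫ x in Ω, ‖gradient (ζ i) x‖ ^ 2) +
        ∑ i, ∑ j, ∫ x in Ω, Hpp H i j (u x) * ζ i x * ζ j x

/-- `u` is a pointwise stable solution of `Δ u = ∇H(u)` on `Ω`: there are `λ ≥ 0`
and nowhere-vanishing `C²` functions `φ_i` with `Δ φ_i = Σ_j H_{u_i u_j}(u) φ_j - λ φ_i`
and `H_{u_i u_j}(u) φ_i φ_j ≤ 0` for `i < j`. -/
def PointwiseStable {N m : ℕ} (H : EuclideanSpace ℝ (Fin m) → ℝ)
    (u : EuclideanSpace ℝ (Fin N) → EuclideanSpace ℝ (Fin m))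
    (Ω : Set (EuclideanSpace ℝ (Fin N))) : Prop :=
  ∃ (lam : ℝ) (φ : Fin m → EuclideanSpace ℝ (Fin N) → ℝ),
    0 ≤ lam ∧ (∀ i, ContDiff ℝ 2 (φ i)) ∧ (∀ i, ∀ x ∈ Ω, φ i x ≠ 0) ∧
    (∀ i, ∀ x ∈ Ω, lap (φ i) x = (∑ j, Hpp H i j (u x) * φ j x) - lam * φ i x) ∧
    (∀ i j : Fin m, i < j → ∀ x ∈ Ω, Hpp H i j (u x) * φ i x * φ j x ≤ 0)

/-- The system `Δ u = ∇H(u)` is orientable along `u`: there exist nonzero `C¹`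
functions `θ_i`, none of which changes sign, with `H_{u_i u_j}(u) θ_i θ_j ≤ 0` for `i < j`. -/
def OrientableAlong {N m : ℕ} (H : EuclideanSpace ℝ (Fin m) → ℝ)
    (u : EuclideanSpace ℝ (Fin N) → EuclideanSpace ℝ (Fin m)) : Prop :=
  ∃ θ : Fin m → EuclideanSpace ℝ (Fin N) → ℝ,
    (∀ i, ContDiff ℝ 1 (θ i)) ∧ (∀ i, ∃ x, θ i x ≠ 0) ∧
    (∀ i, (∀ x, 0 ≤ θ i x) ∨ (∀ x, θ i x ≤ 0)) ∧
    (∀ i j : Fin m, i < j → ∀ x, Hpp H i j (u x) * θ i x * θ j x ≤ 0)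

/-- A function `w : ℝ^N → ℝ` is one-dimensional. -/
def OneDim {N : ℕ} (w : EuclideanSpace ℝ (Fin N) → ℝ) : Prop :=
  ∃ (a : EuclideanSpace ℝ (Fin N)) (g : ℝ → ℝ), ∀ x, w x = g (inner ℝ a x)

/-- `u` is an `H`-monotone solution with respect to the coordinate direction `ν`. -/
def HMonotone {N m : ℕ} (H : EuclideanSpace ℝ (Fin m) → ℝ)
    (u : EuclideanSpace ℝ (Fin N) → EuclideanSpace ℝ (Fin m)) (ν : Fin N) : Prop :=
  (∀ (i : Fin m) (x : EuclideanSpace ℝ (Fin N)), pd (fun y => u y i) ν x ≠ 0) ∧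
  (∀ i j : Fin m, i < j → ∀ x,
    Hpp H i j (u x) * (pd (fun y => u y i) ν x * pd (fun y => u y j) ν x) ≤ 0)

/-- The point `(x', t) ∈ ℝ^{n+1}` built from `x' ∈ ℝ^n` and a last coordinate `t`. -/
def snocPt {n : ℕ} (x' : EuclideanSpace ℝ (Fin n)) (t : ℝ) :
    EuclideanSpace ℝ (Fin (n + 1)) :=
  WithLp.toLp 2 (Fin.snoc (α := fun _ => ℝ) (WithLp.ofLp x') t)

-- AUX START
lemma stmt17_deriv_st_zero : ∀ t ∉ Set.Icc (0:ℝ) 1, deriv Real.smoothTransition t = 0 := by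
  intro t ht
  simp only [Set.mem_Icc, not_and_or, not_le] at ht
  rcases ht with h | h
  · have : Real.smoothTransition =ᶠ[nhds t] (fun _ => 0) := by
      filter_upwards [Iio_mem_nhds h] with s hs
      exact Real.smoothTransition.zero_of_nonpos (le_of_lt hs)
    rw [this.deriv_eq]; simp
  · have : Real.smoothTransition =ᶠ[nhds t] (fun _ => 1) := by
      filter_upwards [Ioi_mem_nhds h] with s hs
      exact Real.smoothTransition.one_of_one_le (le_of_lt hs)
    rw [this.deriv_eq]; simp

lemma stmt17_exists_K : ∃ K : ℝ, 0 ≤ K ∧ ∀ t, |deriv Real.smoothTransition t| ≤ K := by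
  have hc : Continuous (deriv Real.smoothTransition) :=
    (Real.smoothTransition.contDiff (n := 1)).continuous_deriv le_rfl
  have hs : HasCompactSupport (deriv Real.smoothTransition) :=
    HasCompactSupport.intro isCompact_Icc stmt17_deriv_st_zero
  obtain ⟨C, hC⟩ := hs.exists_bound_of_continuous hc
  exact ⟨max C 0, le_max_right _ _, fun t =>
    (Real.norm_eq_abs _ ▸ hC t).trans (le_max_left _ _)⟩

lemma stmt17_grad_sq {N : ℕ} (w : EuclideanSpace ℝ (Fin N) → ℝ) (x : EuclideanSpace ℝ (Fin N)) :
    ‖gradient w x‖^2 = ∑ k, (fderiv ℝ w x (EuclideanSpace.single k 1))^2 := by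
  rw [EuclideanSpace.norm_eq, Real.sq_sqrt (by positivity)]
  refine Finset.sum_congr rfl fun k _ => ?_
  rw [Real.norm_eq_abs, sq_abs]
  congr 1
  rw [← InnerProductSpace.toDual_symm_apply (𝕜 := ℝ) (E := EuclideanSpace ℝ (Fin N)),
    real_inner_comm]
  simp [PiLp.inner_apply, EuclideanSpace.single_apply]
  rfl

lemma stmt17_sumsq {N : ℕ} (y : EuclideanSpace ℝ (Fin N)) : ∑ k, (y k)^2 = ‖y‖^2 := by
  rw [EuclideanSpace.norm_eq, Real.sq_sqrt (by positivity)]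
  exact Finset.sum_congr rfl fun k _ => by rw [Real.norm_eq_abs, sq_abs]

/-- The cutoff function. -/
def stmt17ζ (N : ℕ) (R : ℝ) (x : EuclideanSpace ℝ (Fin N)) : ℝ :=
  Real.smoothTransition (4/3 - ‖x‖^2 * (3*R^2)⁻¹)

/-- The scalar factor in the derivative of the cutoff. -/
def stmt17c (N : ℕ) (R : ℝ) (x : EuclideanSpace ℝ (Fin N)) : ℝ :=
  -(2*(3*R^2)⁻¹) * deriv Real.smoothTransition (4/3 - ‖x‖^2 * (3*R^2)⁻¹)

lemma stmt17ζ_nonneg {N : ℕ} (R : ℝ) (x : EuclideanSpace ℝ (Fin N)) : 0 ≤ stmt17ζ N R x :=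
  Real.smoothTransition.nonneg _

lemma stmt17ζ_le_one {N : ℕ} (R : ℝ) (x : EuclideanSpace ℝ (Fin N)) : stmt17ζ N R x ≤ 1 :=
  Real.smoothTransition.le_one _

lemma stmt17ζ_one {N : ℕ} {R : ℝ} (hR : 0 < R) {x : EuclideanSpace ℝ (Fin N)}
    (hx : ‖x‖ ≤ R) : stmt17ζ N R x = 1 := by
  apply Real.smoothTransition.one_of_one_le
  have h2 : ‖x‖^2 ≤ R^2 := by nlinarith [norm_nonneg x]
  have h3 : (0:ℝ) < 3*R^2 := by positivity
  have hmm : ‖x‖^2 * (3*R^2)⁻¹ ≤ R^2 * (3*R^2)⁻¹ :=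
    mul_le_mul_of_nonneg_right h2 (by positivity)
  have hRR : R^2 * (3*R^2)⁻¹ = 1/3 := by field_simp
  rw [hRR] at hmm
  linarith

lemma stmt17ζ_zero {N : ℕ} {R : ℝ} (hR : 0 < R) {x : EuclideanSpace ℝ (Fin N)}
    (hx : x ∉ closedBall (0 : EuclideanSpace ℝ (Fin N)) (2*R)) : stmt17ζ N R x = 0 := by
  apply Real.smoothTransition.zero_of_nonpos
  rw [mem_closedBall, dist_zero_right, not_le] at hx
  have h2 : (2*R)^2 ≤ ‖x‖^2 := by nlinarith [norm_nonneg x]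
  have h3 : (0:ℝ) < 3*R^2 := by positivity
  have : (2*R)^2 * (3*R^2)⁻¹ ≤ ‖x‖^2 * (3*R^2)⁻¹ :=
    mul_le_mul_of_nonneg_right h2 (by positivity)
  have hRR : (2*R)^2 * (3*R^2)⁻¹ = 4/3 := by field_simp; ring
  rw [hRR] at this
  linarith

lemma stmt17ζ_contDiff (N : ℕ) (R : ℝ) : ContDiff ℝ 2 (stmt17ζ N R) := by
  apply Real.smoothTransition.contDiff.comp
  exact contDiff_const.sub ((contDiff_norm_sq ℝ).mul contDiff_const)

lemma stmt17ζ_hasFDerivAt {N : ℕ} (R : ℝ) (x : EuclideanSpace ℝ (Fin N)) :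
    HasFDerivAt (stmt17ζ N R) ((stmt17c N R x) •
      (innerSL ℝ x : EuclideanSpace ℝ (Fin N) →L[ℝ] ℝ)) x := by
  have h1 : HasFDerivAt (fun y : EuclideanSpace ℝ (Fin N) => ‖y‖^2)
      (2 • (innerSL ℝ x : EuclideanSpace ℝ (Fin N) →L[ℝ] ℝ)) x :=
    (hasStrictFDerivAt_norm_sq x).hasFDerivAt
  have h2 := (h1.mul_const ((3*R^2)⁻¹)).const_sub (4/3)
  have h3 : HasDerivAt Real.smoothTransition
      (deriv Real.smoothTransition (4/3 - ‖x‖^2 * (3*R^2)⁻¹)) (4/3 - ‖x‖^2 * (3*R^2)⁻¹) :=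
    ((Real.smoothTransition.contDiff (n := 1)).differentiable one_ne_zero _).hasDerivAt
  have h4 := h3.comp_hasFDerivAt x h2
  refine HasFDerivAt.congr_fderiv h4 ?_
  ext v
  simp [stmt17c]
  ring

lemma stmt17ζ_fderiv {N : ℕ} (R : ℝ) (x : EuclideanSpace ℝ (Fin N)) (k : Fin N) :
    fderiv ℝ (stmt17ζ N R) x (EuclideanSpace.single k 1) = stmt17c N R x * x k := by
  rw [(stmt17ζ_hasFDerivAt R x).fderiv]
  simp only [ContinuousLinearMap.smul_apply, smul_eq_mul, innerSL_apply_apply]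
  congr 1
  rw [real_inner_comm]
  simp [PiLp.inner_apply, EuclideanSpace.single_apply]

lemma stmt17c_zero {N : ℕ} {R : ℝ} (hR : 0 < R) {x : EuclideanSpace ℝ (Fin N)}
    (hx : x ∉ closedBall (0 : EuclideanSpace ℝ (Fin N)) (2*R)) : stmt17c N R x = 0 := by
  rw [mem_closedBall, dist_zero_right, not_le] at hx
  have h2 : (2*R)^2 < ‖x‖^2 := by nlinarith [norm_nonneg x]
  have harg : 4/3 - ‖x‖^2 * (3*R^2)⁻¹ < 0 := by
    have : (2*R)^2 * (3*R^2)⁻¹ < ‖x‖^2 * (3*R^2)⁻¹ :=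
      mul_lt_mul_of_pos_right h2 (by positivity)
    have hRR : (2*R)^2 * (3*R^2)⁻¹ = 4/3 := by field_simp; ring
    rw [hRR] at this
    linarith
  have hmem : (4/3 - ‖x‖^2 * (3*R^2)⁻¹) ∉ Set.Icc (0:ℝ) 1 := by
    simp only [Set.mem_Icc, not_and_or, not_le]
    left; exact harg
  have hd := stmt17_deriv_st_zero _ hmem
  unfold stmt17c
  rw [hd, mul_zero]

lemma stmt17c_bound {N : ℕ} {K R : ℝ} (hKb : ∀ t, |deriv Real.smoothTransition t| ≤ K)
    (hR : 1 ≤ R) (x : EuclideanSpace ℝ (Fin N)) : |stmt17c N R x| ≤ K / R^2 := by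
  have hR0 : (0:ℝ) < R := lt_of_lt_of_le one_pos hR
  have hK0 : 0 ≤ K := le_trans (abs_nonneg _) (hKb 0)
  rw [stmt17c, abs_mul, abs_neg, abs_of_nonneg (by positivity : (0:ℝ) ≤ 2*(3*R^2)⁻¹)]
  have h1 := hKb (4/3 - ‖x‖^2 * (3*R^2)⁻¹)
  have h2 : 2*(3*R^2)⁻¹ ≤ (R^2)⁻¹ := by
    rw [show (2:ℝ)*(3*R^2)⁻¹ = 2/(3*R^2) by ring, show (R^2)⁻¹ = 1/R^2 by ring,
      div_le_div_iff₀ (by positivity) (by positivity)]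
    nlinarith
  calc 2*(3*R^2)⁻¹ * |deriv Real.smoothTransition (4/3 - ‖x‖^2 * (3*R^2)⁻¹)|
      ≤ (R^2)⁻¹ * K := by
        apply mul_le_mul h2 h1 (abs_nonneg _) (by positivity)
    _ = K / R^2 := by ring

-- AUX END

set_option maxHeartbeats 1000000 in
lemma stmt17_main {N : ℕ} (K B R : ℝ) (hK : 0 ≤ K)
    (hKb : ∀ t, |deriv Real.smoothTransition t| ≤ K) (hB : 0 ≤ B) (hR : 1 ≤ R)
    (w : EuclideanSpace ℝ (Fin N) → ℝ) (hw : ContDiff ℝ 2 w)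
    (hwB : ∀ x, |w x| ≤ B) (hlap : ∀ x, lap w x ≤ 0) :
    ∫ x in ball (0 : EuclideanSpace ℝ (Fin N)) R, ‖gradient w x‖ ^ 2
      ≤ 64 * B^2 * K^2 * 2^N * (volume (ball (0:EuclideanSpace ℝ (Fin N)) 1)).toReal
        * R ^ ((N:ℤ) - 2) := by
  have hR0 : (0:ℝ) < R := lt_of_lt_of_le one_pos hR
  set V : ℝ := (volume (ball (0:EuclideanSpace ℝ (Fin N)) 1)).toReal with hVdef
  have hV0 : 0 ≤ V := ENNReal.toReal_nonneg
  set ζ : EuclideanSpace ℝ (Fin N) → ℝ := stmt17ζ N R with hζdef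
  set c : EuclideanSpace ℝ (Fin N) → ℝ := stmt17c N R with hcdef
  set g : Fin N → EuclideanSpace ℝ (Fin N) → ℝ :=
    fun k x => fderiv ℝ w x (EuclideanSpace.single k 1) with hgdef
  set f : EuclideanSpace ℝ (Fin N) → ℝ := fun x => ζ x * ζ x * (w x - B) with hfdef
  -- basic regularity
  have hζ2 : ContDiff ℝ 2 ζ := stmt17ζ_contDiff N R
  have hζ1 : ContDiff ℝ 1 ζ := hζ2.of_le one_le_two
  have hζcont : Continuous ζ := hζ1.continuous
  have hw1 : ContDiff ℝ 1 w := hw.of_le one_le_two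
  have hg1 : ∀ k, ContDiff ℝ 1 (g k) := fun k =>
    (hw.fderiv_right (by norm_num)).clm_apply contDiff_const
  have hgc : ∀ k, Continuous (g k) := fun k => (hg1 k).continuous
  have hf1 : ContDiff ℝ 1 f := (hζ1.mul hζ1).mul ((hw1.sub contDiff_const))
  have hfcont : Continuous f := hf1.continuous
  have hζ'cont : ∀ k, Continuous (fun x => fderiv ℝ ζ x (EuclideanSpace.single k 1)) := fun k =>
    (hζ2.continuous_fderiv two_ne_zero).clm_apply continuous_const
  have hDGc : ∀ k, Continuous (fun x => fderiv ℝ (g k) x (EuclideanSpace.single k 1)) := fun k =>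
    ((hg1 k).continuous_fderiv one_ne_zero).clm_apply continuous_const
  -- vanishing outside the ball of radius 2R
  have hζ0 : ∀ x ∉ closedBall (0 : EuclideanSpace ℝ (Fin N)) (2*R), ζ x = 0 := fun x hx =>
    stmt17ζ_zero hR0 hx
  have hc0 : ∀ x ∉ closedBall (0 : EuclideanSpace ℝ (Fin N)) (2*R), c x = 0 := fun x hx =>
    stmt17c_zero hR0 hx
  have hDζ0 : ∀ k, ∀ x ∉ closedBall (0 : EuclideanSpace ℝ (Fin N)) (2*R),
      fderiv ℝ ζ x (EuclideanSpace.single k 1) = 0 := by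
    intro k x hx
    rw [hζdef, stmt17ζ_fderiv]
    rw [hcdef] at hc0
    rw [hc0 x hx, zero_mul]
  have hf0 : ∀ x ∉ closedBall (0 : EuclideanSpace ℝ (Fin N)) (2*R), f x = 0 := by
    intro x hx; simp [hfdef, hζ0 x hx]
  have hsf : HasCompactSupport f :=
    HasCompactSupport.intro (isCompact_closedBall _ _) hf0
  have keyInt : ∀ h : EuclideanSpace ℝ (Fin N) → ℝ, Continuous h →
      (∀ x ∉ closedBall (0 : EuclideanSpace ℝ (Fin N)) (2*R), h x = 0) → Integrable h :=
    fun h hc h0 => hc.integrable_of_hasCompactSupport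
      (HasCompactSupport.intro (isCompact_closedBall _ _) h0)
  -- derivative of f
  have hfD : ∀ x k, fderiv ℝ f x (EuclideanSpace.single k 1)
      = 2 * ζ x * fderiv ℝ ζ x (EuclideanSpace.single k 1) * (w x - B) + ζ x * ζ x * g k x := by
    intro x k
    have hζd := (hζ1.differentiable one_ne_zero x).hasFDerivAt
    have hwd := ((hw.differentiable two_ne_zero) x).hasFDerivAt
    have h := ((hζd.mul hζd).mul (hwd.sub_const B)).fderiv
    rw [hfdef, show (fun x => ζ x * ζ x * (w x - B)) = (ζ * ζ * fun x => w x - B) from rfl, h]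
    simp only [ContinuousLinearMap.add_apply, ContinuousLinearMap.smul_apply, smul_eq_mul, Pi.mul_apply]
    rw [hgdef]
    ring
  -- integrability of the pieces
  have Ia : ∀ k, Integrable (fun x => (ζ x * g k x)^2) := fun k =>
    keyInt _ ((hζcont.mul (hgc k)).pow 2) (fun x hx => by simp [hζ0 x hx])
  have Ibad : ∀ k, Integrable (fun x =>
      2 * ζ x * fderiv ℝ ζ x (EuclideanSpace.single k 1) * (w x - B) * g k x) := fun k =>
    keyInt _ ((((continuous_const.mul hζcont).mul (hζ'cont k)).mul
        (hw1.continuous.sub continuous_const)).mul (hgc k))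
      (fun x hx => by simp [hζ0 x hx])
  have IDζ : ∀ k, Integrable (fun x => (fderiv ℝ ζ x (EuclideanSpace.single k 1))^2) := fun k =>
    keyInt _ ((hζ'cont k).pow 2) (fun x hx => by rw [hDζ0 k x hx]; simp)
  have Ih : ∀ k, Integrable (fun x =>
      2*(w x - B)^2*(fderiv ℝ ζ x (EuclideanSpace.single k 1))^2) := fun k =>
    keyInt _ ((continuous_const.mul ((hw1.continuous.sub continuous_const).pow 2)).mul
        ((hζ'cont k).pow 2))
      (fun x hx => by rw [hDζ0 k x hx]; simp)
  have Iflap : ∀ k, Integrable (fun x =>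
      f x * fderiv ℝ (g k) x (EuclideanSpace.single k 1)) := fun k =>
    keyInt _ (hfcont.mul (hDGc k)) (fun x hx => by rw [hf0 x hx, zero_mul])
  -- integration by parts
  have hIBP : ∀ k, ∫ x, f x * fderiv ℝ (g k) x (EuclideanSpace.single k 1)
      = -∫ x, fderiv ℝ f x (EuclideanSpace.single k 1) * g k x := by
    intro k
    have hf'c : Continuous (fun x => fderiv ℝ f x (EuclideanSpace.single k 1)) :=
      (hf1.continuous_fderiv one_ne_zero).clm_apply continuous_const
    refine integral_mul_fderiv_eq_neg_fderiv_mul_of_integrable ?_ ?_ ?_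
      (fun x _ => hf1.differentiable one_ne_zero x) (fun x _ => (hg1 k).differentiable one_ne_zero x)
    · exact ((hf'c.mul (hgc k)).integrable_of_hasCompactSupport
        ((hsf.fderiv_apply ℝ (EuclideanSpace.single k 1)).mul_right))
    · exact ((hfcont.mul (hDGc k)).integrable_of_hasCompactSupport (hsf.mul_right))
    · exact ((hfcont.mul (hgc k)).integrable_of_hasCompactSupport (hsf.mul_right))
  -- Step 1 : the solution term is nonnegative
  have hpos : 0 ≤ ∑ k, ∫ x, f x * fderiv ℝ (g k) x (EuclideanSpace.single k 1) := by
    rw [← integral_finset_sum _ (fun k _ => Iflap k)]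
    refine integral_nonneg fun x => ?_
    show (0:ℝ) ≤ ∑ k, f x * fderiv ℝ (g k) x (EuclideanSpace.single k 1)
    have hsum : ∑ k, f x * fderiv ℝ (g k) x (EuclideanSpace.single k 1) = f x * lap w x := by
      rw [← Finset.mul_sum]; rfl
    rw [hsum]
    have hfx : f x ≤ 0 := by
      have h1 : w x - B ≤ 0 := sub_nonpos.2 ((le_abs_self _).trans (hwB x))
      have h2 : 0 ≤ ζ x * ζ x := mul_self_nonneg _
      exact mul_nonpos_of_nonneg_of_nonpos h2 h1
    nlinarith [hlap x, hfx]
  -- Step 2 : split the right-hand side of integration by parts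
  have hsplit : ∀ k, ∫ x, fderiv ℝ f x (EuclideanSpace.single k 1) * g k x =
      (∫ x, 2 * ζ x * fderiv ℝ ζ x (EuclideanSpace.single k 1) * (w x - B) * g k x)
        + ∫ x, (ζ x * g k x)^2 := by
    intro k
    rw [← integral_add (Ibad k) (Ia k)]
    refine integral_congr_ae (Filter.Eventually.of_forall fun x => ?_)
    show fderiv ℝ f x (EuclideanSpace.single k 1) * g k x
      = 2 * ζ x * fderiv ℝ ζ x (EuclideanSpace.single k 1) * (w x - B) * g k x + (ζ x * g k x)^2
    rw [hfD x k]; ring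
  have hIBPsum : ∑ k, ∫ x, f x * fderiv ℝ (g k) x (EuclideanSpace.single k 1)
      = -((∑ k, ∫ x, 2 * ζ x * fderiv ℝ ζ x (EuclideanSpace.single k 1) * (w x - B) * g k x)
          + ∑ k, ∫ x, (ζ x * g k x)^2) := by
    rw [← Finset.sum_add_distrib, ← Finset.sum_neg_distrib]
    refine Finset.sum_congr rfl fun k _ => ?_
    rw [hIBP k, hsplit k]
  have hS1 : (∑ k, ∫ x, (ζ x * g k x)^2)
      ≤ -(∑ k, ∫ x, 2 * ζ x * fderiv ℝ ζ x (EuclideanSpace.single k 1) * (w x - B) * g k x) := by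
    rw [hIBPsum] at hpos
    linarith
  -- Step 3 : pointwise Cauchy–Schwarz / AM-GM bound
  have hS2 : ∀ k, (∫ x, -(2 * ζ x * fderiv ℝ ζ x (EuclideanSpace.single k 1) * (w x - B) * g k x))
      ≤ (1/2) * (∫ x, (ζ x * g k x)^2)
        + ∫ x, 2*(w x - B)^2*(fderiv ℝ ζ x (EuclideanSpace.single k 1))^2 := by
    intro k
    have h1 : (∫ x, -(2 * ζ x * fderiv ℝ ζ x (EuclideanSpace.single k 1) * (w x - B) * g k x))
        ≤ ∫ x, ((1/2) * (ζ x * g k x)^2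
            + 2*(w x - B)^2*(fderiv ℝ ζ x (EuclideanSpace.single k 1))^2) := by
      refine integral_mono (Ibad k).neg (((Ia k).const_mul (1/2)).add (Ih k)) fun x => ?_
      have h := sq_nonneg (ζ x * g k x + 2*(w x - B)*(fderiv ℝ ζ x (EuclideanSpace.single k 1)))
      nlinarith [h]
    rw [integral_add ((Ia k).const_mul (1/2)) (Ih k), integral_const_mul] at h1
    exact h1
  have hnegsum : -(∑ k, ∫ x, 2 * ζ x * fderiv ℝ ζ x (EuclideanSpace.single k 1) * (w x - B) * g k x)
      = ∑ k, ∫ x, -(2 * ζ x * fderiv ℝ ζ x (EuclideanSpace.single k 1) * (w x - B) * g k x) := by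
    rw [← Finset.sum_neg_distrib]
    exact Finset.sum_congr rfl fun k _ => (integral_neg _).symm
  -- Step 4 : bound with the gradient of the cutoff
  have hS4 : ∀ k, ∫ x, 2*(w x - B)^2*(fderiv ℝ ζ x (EuclideanSpace.single k 1))^2
      ≤ ∫ x, 8*B^2 * (fderiv ℝ ζ x (EuclideanSpace.single k 1))^2 := by
    intro k
    refine integral_mono (Ih k) ((IDζ k).const_mul _) fun x => ?_
    have h1 := abs_le.1 (hwB x)
    have h2 : (w x - B)^2 ≤ 4*B^2 := by nlinarith [h1.1, h1.2]
    nlinarith [sq_nonneg (fderiv ℝ ζ x (EuclideanSpace.single k 1)), h2]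
  have hTsum : ∑ k, ∫ x, 8*B^2 * (fderiv ℝ ζ x (EuclideanSpace.single k 1))^2
      = 8*B^2 * ∫ x, ∑ k, (fderiv ℝ ζ x (EuclideanSpace.single k 1))^2 := by
    rw [integral_finset_sum _ (fun k _ => IDζ k), Finset.mul_sum]
    exact Finset.sum_congr rfl fun k _ => integral_const_mul _ _
  -- Step 5 : the integral of the squared gradient of the cutoff
  have hIg : ∫ x, ∑ k, (fderiv ℝ ζ x (EuclideanSpace.single k 1))^2
      ≤ (4*K^2/R^2) * ((2*R)^N * V) := by
    have hvan : ∀ x ∉ closedBall (0:EuclideanSpace ℝ (Fin N)) (2*R),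
        ∑ k, (fderiv ℝ ζ x (EuclideanSpace.single k 1))^2 = 0 := by
      intro x hx
      refine Finset.sum_eq_zero fun k _ => ?_
      rw [hDζ0 k x hx]; simp
    rw [← setIntegral_eq_integral_of_forall_compl_eq_zero hvan]
    have hcontsum : Continuous (fun x => ∑ k, (fderiv ℝ ζ x (EuclideanSpace.single k 1))^2) :=
      continuous_finset_sum _ fun k _ => (hζ'cont k).pow 2
    have hvol : (volume (closedBall (0:EuclideanSpace ℝ (Fin N)) (2*R))).toReal
        = (2*R)^N * V := by
      rw [Measure.addHaar_closedBall volume 0 (by positivity : (0:ℝ) ≤ 2*R),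
        finrank_euclideanSpace_fin, ENNReal.toReal_mul, ENNReal.toReal_ofReal (by positivity),
        hVdef]
    calc ∫ x in closedBall (0:EuclideanSpace ℝ (Fin N)) (2*R),
          ∑ k, (fderiv ℝ ζ x (EuclideanSpace.single k 1))^2
        ≤ ∫ _x in closedBall (0:EuclideanSpace ℝ (Fin N)) (2*R), (4*K^2/R^2) := by
          refine setIntegral_mono_on
            (ContinuousOn.integrableOn_compact (isCompact_closedBall _ _) hcontsum.continuousOn)
            (integrableOn_const (isCompact_closedBall _ _).measure_lt_top.ne)
            measurableSet_closedBall (fun x hx => ?_)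
          rw [mem_closedBall, dist_zero_right] at hx
          have hxx : ∑ k, (fderiv ℝ ζ x (EuclideanSpace.single k 1))^2 = (c x)^2 * ‖x‖^2 := by
            rw [← stmt17_sumsq x, Finset.mul_sum]
            refine Finset.sum_congr rfl fun k _ => ?_
            rw [hζdef, stmt17ζ_fderiv, hcdef]; ring
          rw [hxx]
          have hcx := stmt17c_bound (N := N) hKb hR x
          rw [← hcdef] at hcx
          have h1 : (c x)^2 ≤ (K/R^2)^2 := by
            rw [← sq_abs (c x)]
            have h0 : (0:ℝ) ≤ K / R^2 := by positivity
            nlinarith [abs_nonneg (c x), hcx]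
          have h2 : ‖x‖^2 ≤ (2*R)^2 := by nlinarith [norm_nonneg x]
          have h3 : (c x)^2 * ‖x‖^2 ≤ (K/R^2)^2 * (2*R)^2 :=
            mul_le_mul h1 h2 (sq_nonneg _) (by positivity)
          have h4 : (K/R^2)^2 * (2*R)^2 = 4*K^2/R^2 := by field_simp; ring
          linarith [h4 ▸ h3]
      _ = (4*K^2/R^2) * ((2*R)^N * V) := by
          rw [setIntegral_const, smul_eq_mul, measureReal_def, hvol]; ring
  -- Step 6 : the Caccioppoli bound for S
  have hSbound : (∑ k, ∫ x, (ζ x * g k x)^2) ≤ 16*B^2 * ((4*K^2/R^2) * ((2*R)^N * V)) := by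
    have h2 : (∑ k, ∫ x, -(2 * ζ x * fderiv ℝ ζ x (EuclideanSpace.single k 1) * (w x - B) * g k x))
        ≤ ∑ k, ((1/2) * (∫ x, (ζ x * g k x)^2)
            + ∫ x, 2*(w x - B)^2*(fderiv ℝ ζ x (EuclideanSpace.single k 1))^2) :=
      Finset.sum_le_sum fun k _ => hS2 k
    have h3 : ∑ k, ((1/2) * (∫ x, (ζ x * g k x)^2)
          + ∫ x, 2*(w x - B)^2*(fderiv ℝ ζ x (EuclideanSpace.single k 1))^2)
        = (1/2) * (∑ k, ∫ x, (ζ x * g k x)^2)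
          + ∑ k, ∫ x, 2*(w x - B)^2*(fderiv ℝ ζ x (EuclideanSpace.single k 1))^2 := by
      rw [Finset.sum_add_distrib, Finset.mul_sum]
    have h5 : (∑ k, ∫ x, 2*(w x - B)^2*(fderiv ℝ ζ x (EuclideanSpace.single k 1))^2)
        ≤ ∑ k, ∫ x, 8*B^2 * (fderiv ℝ ζ x (EuclideanSpace.single k 1))^2 :=
      Finset.sum_le_sum fun k _ => hS4 k
    have h6 : 8*B^2 * (∫ x, ∑ k, (fderiv ℝ ζ x (EuclideanSpace.single k 1))^2)
        ≤ 8*B^2 * ((4*K^2/R^2) * ((2*R)^N * V)) :=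
      mul_le_mul_of_nonneg_left hIg (by positivity)
    rw [hnegsum] at hS1
    rw [h3] at h2
    rw [hTsum] at h5
    linarith
  -- Step 7 : compare with the integral over the ball
  have hball : ∫ x in ball (0:EuclideanSpace ℝ (Fin N)) R, ‖gradient w x‖^2
      ≤ ∑ k, ∫ x, (ζ x * g k x)^2 := by
    have h1 : ∫ x in ball (0:EuclideanSpace ℝ (Fin N)) R, ‖gradient w x‖^2
        = ∫ x in ball (0:EuclideanSpace ℝ (Fin N)) R, ∑ k, (ζ x * g k x)^2 := by
      refine setIntegral_congr_fun measurableSet_ball fun x hx => ?_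
      rw [stmt17_grad_sq]
      have hx' : ‖x‖ ≤ R := by
        rw [mem_ball, dist_zero_right] at hx; exact hx.le
      refine Finset.sum_congr rfl fun k _ => ?_
      rw [hζdef, stmt17ζ_one hR0 hx', one_mul]
    rw [h1]
    have h2 : ∫ x in ball (0:EuclideanSpace ℝ (Fin N)) R, ∑ k, (ζ x * g k x)^2
        ≤ ∫ x, ∑ k, (ζ x * g k x)^2 :=
      setIntegral_le_integral (integrable_finset_sum _ fun k _ => Ia k)
        (Filter.Eventually.of_forall fun x => by positivity)
    exact h2.trans_eq (integral_finset_sum _ fun k _ => Ia k)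
  -- Step 8 : final arithmetic
  have hfin : 16*B^2 * ((4*K^2/R^2) * ((2*R)^N * V))
      = 64 * B^2 * K^2 * 2^N * V * R ^ ((N:ℤ) - 2) := by
    have hz : R ^ ((N:ℤ)-2) = R^N / R^2 := by
      rw [zpow_sub₀ hR0.ne']
      norm_cast
    rw [hz, mul_pow]
    field_simp
    ring
  calc ∫ x in ball (0:EuclideanSpace ℝ (Fin N)) R, ‖gradient w x‖^2
      ≤ ∑ k, ∫ x, (ζ x * g k x)^2 := hball
    _ ≤ 16*B^2 * ((4*K^2/R^2) * ((2*R)^N * V)) := hSbound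
    _ = 64 * B^2 * K^2 * 2^N * V * R ^ ((N:ℤ) - 2) := hfin

/-- the energy estimate `∑_i ∫_{B_R} |∇u_i|² ≤ C R^{N-2}` for bounded
solutions with `H_{u_i}(u) ≤ 0`, with `C` depending only on `N`, `m` and the bound `B`. -/
theorem stmt_17 (N m : ℕ) (B : ℝ) : ∃ C : ℝ, 0 < C ∧
    ∀ (H : EuclideanSpace ℝ (Fin m) → ℝ)
      (u : EuclideanSpace ℝ (Fin N) → EuclideanSpace ℝ (Fin m)),
      ContDiff ℝ 2 H → ContDiff ℝ 2 u → IsSolution H u Set.univ →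
      (∀ (i : Fin m) (x : EuclideanSpace ℝ (Fin N)), |u x i| ≤ B) →
      (∀ (i : Fin m) (x : EuclideanSpace ℝ (Fin N)), Hp H i (u x) ≤ 0) →
      ∀ R : ℝ, 1 ≤ R →
        (∑ i, ∫ x in ball (0 : EuclideanSpace ℝ (Fin N)) R,
            ‖gradient (fun y => u y i) x‖ ^ 2)
          ≤ C * R ^ ((N : ℤ) - 2) := by
  obtain ⟨K, hK, hKb⟩ := stmt17_exists_K
  set V : ℝ := (volume (ball (0 : EuclideanSpace ℝ (Fin N)) 1)).toReal with hVdef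
  have hV0 : 0 ≤ V := ENNReal.toReal_nonneg
  refine ⟨((m:ℝ)+1) * (64*(B^2+1)*(K^2+1) * 2^N * (V+1)), by positivity, ?_⟩
  intro H u hH hu hsol hbound hHp R hR
  have hR0 : (0:ℝ) < R := lt_of_lt_of_le one_pos hR
  have hRz : (0:ℝ) < R ^ ((N:ℤ)-2) := zpow_pos hR0 _
  rcases Nat.eq_zero_or_pos m with hm | hm
  · subst hm
    rw [show (∑ i : Fin 0, ∫ x in ball (0 : EuclideanSpace ℝ (Fin N)) R,
        ‖gradient (fun y => u y i) x‖ ^ 2) = 0 from Finset.sum_empty]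
    exact le_of_lt (mul_pos (by positivity) hRz)
  · have hB : 0 ≤ B := le_trans (abs_nonneg _) (hbound ⟨0, hm⟩ 0)
    have hper : ∀ i : Fin m, ∫ x in ball (0 : EuclideanSpace ℝ (Fin N)) R,
        ‖gradient (fun y => u y i) x‖ ^ 2 ≤ 64 * B^2 * K^2 * 2^N * V * R ^ ((N:ℤ)-2) := by
      intro i
      refine stmt17_main K B R hK hKb hB hR _ ?_ (fun x => hbound i x) ?_
      · exact (EuclideanSpace.proj i : EuclideanSpace ℝ (Fin m) →L[ℝ] ℝ).contDiff.comp hu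
      · intro x
        rw [hsol i x (Set.mem_univ x)]
        exact hHp i x
    calc (∑ i, ∫ x in ball (0 : EuclideanSpace ℝ (Fin N)) R,
          ‖gradient (fun y => u y i) x‖ ^ 2)
        ≤ ∑ _i : Fin m, 64 * B^2 * K^2 * 2^N * V * R ^ ((N:ℤ)-2) :=
          Finset.sum_le_sum fun i _ => hper i
      _ = (m:ℝ) * (64 * B^2 * K^2 * 2^N * V * R ^ ((N:ℤ)-2)) := by
          rw [Finset.sum_const, Finset.card_univ, Fintype.card_fin, nsmul_eq_mul]
      _ ≤ ((m:ℝ)+1) * (64*(B^2+1)*(K^2+1) * 2^N * (V+1)) * R ^ ((N:ℤ)-2) := by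
          rw [show (m:ℝ) * (64 * B^2 * K^2 * 2^N * V * R ^ ((N:ℤ)-2))
              = ((m:ℝ) * (64 * B^2 * K^2 * 2^N * V)) * R ^ ((N:ℤ)-2) by ring]
          refine mul_le_mul_of_nonneg_right ?_ hRz.le
          have h1 : (m:ℝ) ≤ (m:ℝ)+1 := by linarith
          have h2 : 64 * B^2 * K^2 * 2^N * V ≤ 64*(B^2+1)*(K^2+1) * 2^N * (V+1) := by
            have a1 : B^2*K^2 ≤ (B^2+1)*(K^2+1) := by nlinarith [sq_nonneg B, sq_nonneg K]
            have a2 : B^2*K^2*V ≤ (B^2+1)*(K^2+1)*(V+1) :=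
              mul_le_mul a1 (by linarith) hV0 (by positivity)
            calc 64 * B^2 * K^2 * 2^N * V = (64*2^N) * (B^2*K^2*V) := by ring
              _ ≤ (64*2^N) * ((B^2+1)*(K^2+1)*(V+1)) :=
                  mul_le_mul_of_nonneg_left a2 (by positivity)
              _ = 64*(B^2+1)*(K^2+1) * 2^N * (V+1) := by ring
          exact mul_le_mul h1 h2 (by positivity) (by positivity)
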